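/- The discrete Laplacian noise adding mechanism A(x) = x + θ, where θ has the discretized Laplace PMF with scale λ, is ε-differentially private with ε = (m + Δ)/λ, for adjacency parameter m. -/

import Mathlib

/-- Discretized Laplacian PMF on the lattice `Δℤ` (index `k : ℤ` stands for the point `k·Δ`),
with location `μ·Δ` and scale `λ`. -/
noncomputable def lapPMF (Δ lam : ℝ) (μ : ℤ) (k : ℤ) : ℝ :=
  if μ ≤ k then ((1 - Real.exp (-Δ / lam)) / 2) * Real.exp ((Δ * μ - Δ * k) / lam)
  else ((Real.exp (Δ / lam) - 1) / 2) * Real.exp ((Δ * k - Δ * μ) / lam)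

/-- Exponent function so that `lapPMF = c₁ * exp (lapT / lam)`. -/
noncomputable def lapT (Δ : ℝ) (μ k : ℤ) : ℝ :=
  if μ ≤ k then Δ * μ - Δ * k else Δ * k - Δ * μ + Δ

lemma lapPMF_eq (Δ lam : ℝ) (μ k : ℤ) :
    lapPMF Δ lam μ k = ((1 - Real.exp (-Δ / lam)) / 2) * Real.exp (lapT Δ μ k / lam) := by
  unfold lapPMF lapT
  split
  · rfl
  · rw [show (Δ * k - Δ * μ + Δ) / lam = Δ / lam + (Δ * k - Δ * μ) / lam by ring,
      Real.exp_add]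
    rw [show (-Δ / lam) = -(Δ / lam) by ring, Real.exp_neg]
    have h := Real.exp_pos (Δ / lam)
    field_simp

lemma lapPMF_nonneg (Δ lam : ℝ) (hΔ : 0 < Δ) (hlam : 0 < lam) (μ k : ℤ) :
    0 ≤ lapPMF Δ lam μ k := by
  rw [lapPMF_eq]
  have h1 : Real.exp (-Δ / lam) < 1 := by
    rw [Real.exp_lt_one_iff]
    exact div_neg_of_neg_of_pos (by linarith) hlam
  have h2 := Real.exp_pos (lapT Δ μ k / lam)
  nlinarith

lemma lapT_diff (Δ : ℝ) (hΔ : 0 < Δ) (μ n n' M : ℤ) (h : |n - n'| ≤ M) :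
    lapT Δ μ n ≤ (M : ℝ) * Δ + Δ + lapT Δ μ n' := by
  rw [abs_le] at h
  obtain ⟨h1, h2⟩ := h
  have h1' : (n' : ℝ) - n ≤ M := by exact_mod_cast (by linarith : n' - n ≤ M)
  have h2' : (n : ℝ) - n' ≤ M := by exact_mod_cast (by linarith : n - n' ≤ M)
  unfold lapT
  split <;> split <;> rename_i ha hb
  · nlinarith
  · have hb' : (n' : ℝ) ≤ μ - 1 := by exact_mod_cast (by omega : n' ≤ μ - 1)
    have ha' : (μ : ℝ) ≤ n := by exact_mod_cast ha
    nlinarith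
  · have ha' : (n : ℝ) ≤ μ - 1 := by exact_mod_cast (by omega : n ≤ μ - 1)
    have hb' : (μ : ℝ) ≤ n' := by exact_mod_cast hb
    nlinarith
  · nlinarith

lemma lapPMF_ratio (Δ lam : ℝ) (hΔ : 0 < Δ) (hlam : 0 < lam) (μ n n' M : ℤ)
    (h : |n - n'| ≤ M) :
    lapPMF Δ lam μ n ≤ Real.exp (((M : ℝ) * Δ + Δ) / lam) * lapPMF Δ lam μ n' := by
  rw [lapPMF_eq, lapPMF_eq, mul_comm (Real.exp _), mul_assoc, ← Real.exp_add]
  have hc : 0 ≤ (1 - Real.exp (-Δ / lam)) / 2 := by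
    have h1 : Real.exp (-Δ / lam) ≤ 1 := by
      rw [Real.exp_le_one_iff]
      exact le_of_lt (div_neg_of_neg_of_pos (by linarith) hlam)
    linarith
  apply mul_le_mul_of_nonneg_left _ hc
  apply Real.exp_le_exp.mpr
  rw [← add_div, div_le_div_iff₀ hlam hlam]
  have := lapT_diff Δ hΔ μ n n' M h
  nlinarith

lemma int_sub_injective (c : ℤ) : Function.Injective (fun k : ℤ => k - c) :=
  fun a b h => by simpa using h

lemma lapPMF_summable (Δ lam : ℝ) (hΔ : 0 < Δ) (hlam : 0 < lam) (μ : ℤ) :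
    Summable (fun k : ℤ => lapPMF Δ lam μ k) := by
  have hr0 : 0 < Real.exp (-Δ / lam) := Real.exp_pos _
  have hr1 : Real.exp (-Δ / lam) < 1 := by
    rw [Real.exp_lt_one_iff]
    exact div_neg_of_neg_of_pos (by linarith) hlam
  have hbase : Summable (fun n : ℤ => Real.exp (Δ / lam) * Real.exp (-Δ / lam) ^ n.natAbs) := by
    apply Summable.mul_left
    apply Summable.of_nat_of_neg
    · simpa using summable_geometric_of_lt_one hr0.le hr1
    · simpa using summable_geometric_of_lt_one hr0.le hr1
  have hshift : Summable (fun k : ℤ =>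
      Real.exp (Δ / lam) * Real.exp (-Δ / lam) ^ (k - μ).natAbs) :=
    hbase.comp_injective (int_sub_injective μ)
  apply Summable.of_nonneg_of_le (fun k => lapPMF_nonneg Δ lam hΔ hlam μ k) _ hshift
  intro k
  unfold lapPMF
  split <;> rename_i hk
  · have hE : Real.exp ((Δ * μ - Δ * k) / lam) = Real.exp (-Δ / lam) ^ (k - μ).natAbs := by
      rw [← Real.exp_nat_mul]
      congr 1
      have : ((k - μ).natAbs : ℝ) = (k : ℝ) - μ := by
        rw [Nat.cast_natAbs]
        push_cast
        rw [abs_of_nonneg (by exact_mod_cast (by omega : (0:ℤ) ≤ k - μ))]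
      rw [this]; ring
    rw [hE]
    apply mul_le_mul_of_nonneg_right _ (pow_nonneg hr0.le _)
    have h1 : Real.exp (-Δ / lam) ≤ 1 := by
      rw [Real.exp_le_one_iff]
      exact le_of_lt (div_neg_of_neg_of_pos (by linarith) hlam)
    have h2 : (1 : ℝ) ≤ Real.exp (Δ / lam) := by rw [Real.one_le_exp_iff]; positivity
    linarith
  · have hE : Real.exp ((Δ * k - Δ * μ) / lam) = Real.exp (-Δ / lam) ^ (k - μ).natAbs := by
      rw [← Real.exp_nat_mul]
      congr 1
      have : ((k - μ).natAbs : ℝ) = (μ : ℝ) - k := by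
        rw [Nat.cast_natAbs]
        push_cast
        rw [abs_of_nonpos (by exact_mod_cast (by omega : (k - μ : ℤ) ≤ 0))]
        ring
      rw [this]; ring
    rw [hE]
    apply mul_le_mul_of_nonneg_right _ (pow_nonneg hr0.le _)
    have h2 : (0 : ℝ) < Real.exp (Δ / lam) := Real.exp_pos _
    linarith

/-- The discrete Laplacian noise adding mechanism `A(x) = x + θ` is `ε`-differentially
private with `ε = (m + Δ)/λ`, for adjacency parameter `m = M·Δ`. -/
theorem laplace_mechanism_eps_dp
    (Δ lam : ℝ) (hΔ : 0 < Δ) (hlam : 0 < lam)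
    (μ : ℤ) (M : ℤ) (hM : 0 < M) :
    ∀ x y : ℤ, |x - y| ≤ M → ∀ O : Set ℤ,
      (∑' k : O, lapPMF Δ lam μ ((k : ℤ) - x))
        ≤ Real.exp (((M : ℝ) * Δ + Δ) / lam) * ∑' k : O, lapPMF Δ lam μ ((k : ℤ) - y) := by
  intro x y hxy O
  have hsx : Summable (fun k : O => lapPMF Δ lam μ ((k : ℤ) - x)) := by
    have := ((lapPMF_summable Δ lam hΔ hlam μ).comp_injective
      (int_sub_injective x)).subtype O
    exact this
  have hsy : Summable (fun k : O => lapPMF Δ lam μ ((k : ℤ) - y)) := by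
    have := ((lapPMF_summable Δ lam hΔ hlam μ).comp_injective
      (int_sub_injective y)).subtype O
    exact this
  rw [← tsum_mul_left]
  apply Summable.tsum_le_tsum _ hsx (hsy.mul_left _)
  intro k
  apply lapPMF_ratio Δ lam hΔ hlam μ _ _ M
  have : (k : ℤ) - x - ((k : ℤ) - y) = y - x := by ring
  rw [this, abs_sub_comm]
  exact hxy
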